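/- Fix a finite balanced set Π of Poisson edges and a vertex x. Define the walk ω started at x which repeatedly follows the unused outgoing Poisson edge of largest time from its current vertex, until all outgoing edges of x are used and the walk returns to x. Let η ∈ C(Π) be the cycle of the proper cycle partition containing the last outgoing edge from x used by ω. Then the set P ⊆ Π of Poisson edges traversed by ω equals the union of the up-set H := {η' ∈ C(Π) : η ⪯ η'}. -/

import Mathlib

open scoped Classical

namespace BKT

/-- A Poisson edge: a directed edge of a graph on `V` decorated with a time. -/
abbrev PEdge (V : Type*) := (V × V) × ℝ

variable {V : Type*}

/-- The edges of `Π` going out of `x`. -/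
noncomputable def outEdges (Pi : Finset (PEdge V)) (x : V) : Finset (PEdge V) :=
  Pi.filter (fun e => e.1.1 = x)

/-- The edges of `Π` coming into `x`. -/
noncomputable def inEdges (Pi : Finset (PEdge V)) (x : V) : Finset (PEdge V) :=
  Pi.filter (fun e => e.1.2 = x)

/-- `Π` is balanced: at every vertex the in-degree equals the out-degree. -/
def Balanced (Pi : Finset (PEdge V)) : Prop :=
  ∀ x : V, (outEdges Pi x).card = (inEdges Pi x).card

/-- All times of the Poisson edges of `Π` are distinct. -/
def DistinctTimes (Pi : Finset (PEdge V)) : Prop :=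
  ∀ e ∈ Pi, ∀ e' ∈ Pi, e.2 = e'.2 → e = e'

/-- The edge `e` touches the vertex `x`. -/
def touches (e : PEdge V) (x : V) : Prop := e.1.1 = x ∨ e.1.2 = x

/-- The set of vertices incident to some edge of `η`. -/
noncomputable def verts (η : Finset (PEdge V)) : Finset V :=
  η.image (fun e => e.1.1) ∪ η.image (fun e => e.1.2)

/-- The edge set `η` is connected: no nontrivial split into two parts that do
not share a vertex. -/
def ConnectedEdges (η : Finset (PEdge V)) : Prop :=
  ∀ s ⊆ η, s.Nonempty → s ≠ η →
    ∃ e ∈ s, ∃ e' ∈ η \ s, ∃ x : V, touches e x ∧ touches e' x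

/-- `η` is a cycle: a nonempty connected set of Poisson edges in which every
visited vertex has in-degree and out-degree exactly one. -/
def IsCycle (η : Finset (PEdge V)) : Prop :=
  η.Nonempty ∧ ConnectedEdges η ∧
    ∀ x ∈ verts η, (outEdges η x).card = 1 ∧ (inEdges η x).card = 1

/-- `P` is a partition of `Π` into cycles. -/
def IsCyclePartition (Pi : Finset (PEdge V)) (P : Finset (Finset (PEdge V))) : Prop :=
  (∀ η ∈ P, IsCycle η) ∧ (∀ η ∈ P, η ⊆ Pi) ∧
    (∀ η ∈ P, ∀ η' ∈ P, η ≠ η' → Disjoint η η') ∧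
    (∀ e ∈ Pi, ∃ η ∈ P, e ∈ η)

/-- One step of the activation-time relation: `η` and `η'` share a vertex at
which the activation time of `η` is at most that of `η'`. -/
def stepRel (η η' : Finset (PEdge V)) : Prop :=
  ∃ e ∈ η, ∃ e' ∈ η', e.1.1 = e'.1.1 ∧ e.2 ≤ e'.2

/-- The relation `⪯` on a cycle partition `P`, generated by chains of cycles
in `P` with nondecreasing activation times at shared vertices. -/
def precRel (P : Finset (Finset (PEdge V))) (η η' : Finset (PEdge V)) : Prop :=
  Relation.ReflTransGen (fun a b => a ∈ P ∧ b ∈ P ∧ stepRel a b) η η'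

/-- `P` is a proper cycle partition of `Π`: a cycle partition on which `⪯`
is a partial order (i.e., antisymmetric). -/
def IsProperCyclePartition (Pi : Finset (PEdge V)) (P : Finset (Finset (PEdge V))) : Prop :=
  IsCyclePartition Pi P ∧
    ∀ η ∈ P, ∀ η' ∈ P, precRel P η η' → precRel P η' η → η = η'


/-- The greedy exploration loop started at `x`: a nonempty walk along Poisson
edges of `Π`, using each edge at most once, starting and ending at `x`, which
at every step follows the not-yet-used outgoing Poisson edge of largest time,
and which exhausts all outgoing edges of `x`. -/
def IsGreedyLoop (Pi : Finset (PEdge V)) (x : V) (w : List (PEdge V)) : Prop :=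
  w ≠ [] ∧ w.Nodup ∧ (∀ e ∈ w, e ∈ Pi) ∧
    (∀ e, w.head? = some e → e.1.1 = x) ∧
    (∀ e, w.getLast? = some e → e.1.2 = x) ∧
    w.Chain' (fun e e' => e.1.2 = e'.1.1) ∧
    (∀ i : Fin w.length, ∀ f ∈ Pi, f.1.1 = (w.get i).1.1 →
      f ∉ w.take i → f.2 ≤ (w.get i).2) ∧
    outEdges Pi x ⊆ w.toFinset


/-! ### Auxiliary lemmas -/

lemma toFinset_filter_card' {α : Type*} [DecidableEq α] (p : α → Prop) [DecidablePred p] (l : List α)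
    (h : l.Nodup) : (l.toFinset.filter p).card = (l.filter p).length := by
  have h1 : (l.filter p).toFinset = l.toFinset.filter p := by
    rw [List.toFinset_filter]; congr 1; ext a; simp
  rw [← h1, List.toFinset_card_of_nodup (h.filter _)]

lemma walk_balance (v : V) :
    ∀ (l : List (PEdge V)) (a b : V), l ≠ [] →
    (∀ e, l.head? = some e → e.1.1 = a) → (∀ e, l.getLast? = some e → e.1.2 = b) →
    l.Chain' (fun e e' => e.1.2 = e'.1.1) →
    (l.filter (fun e => e.1.1 = v)).length + (if b = v then 1 else 0)
      = (l.filter (fun e => e.1.2 = v)).length + (if a = v then 1 else 0)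
  | [], a, b, h, _, _, _ => absurd rfl h
  | [e], a, b, _, ha, hb, _ => by
      have ha' : e.1.1 = a := ha e rfl
      have hb' : e.1.2 = b := hb e rfl
      subst ha'; subst hb'
      by_cases h1 : e.1.1 = v <;> by_cases h2 : e.1.2 = v <;>
        simp [List.filter, h1, h2]
  | e :: e2 :: rest, a, b, _, ha, hb, hchain => by
      have hae : e.1.1 = a := ha e rfl
      have hstep : e.1.2 = e2.1.1 := (List.isChain_cons_cons.mp hchain).1
      have ih := walk_balance v (e2 :: rest) e2.1.1 b (by simp)
        (by intro f hf; simp only [List.head?_cons, Option.some.injEq] at hf; rw [← hf])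
        (by intro f hf; apply hb; rwa [List.getLast?_cons_cons])
        ((List.isChain_cons_cons.mp hchain).2)
      subst hae
      rw [← hstep] at ih
      have l1 : ((e :: e2 :: rest).filter (fun f => f.1.1 = v)).length
          = ((e2 :: rest).filter (fun f => f.1.1 = v)).length + (if e.1.1 = v then 1 else 0) := by
        by_cases h : e.1.1 = v <;> simp [List.filter_cons, h]
      have l2 : ((e :: e2 :: rest).filter (fun f => f.1.2 = v)).length
          = ((e2 :: rest).filter (fun f => f.1.2 = v)).length + (if e.1.2 = v then 1 else 0) := by
        by_cases h : e.1.2 = v <;> simp [List.filter_cons, h]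
      rw [l1, l2]
      split_ifs at ih ⊢ <;> omega

lemma mem_verts_fst {η : Finset (PEdge V)} {e : PEdge V} (he : e ∈ η) : e.1.1 ∈ verts η :=
  Finset.mem_union.mpr (Or.inl (Finset.mem_image_of_mem _ he))

lemma mem_verts_snd {η : Finset (PEdge V)} {e : PEdge V} (he : e ∈ η) : e.1.2 ∈ verts η :=
  Finset.mem_union.mpr (Or.inr (Finset.mem_image_of_mem _ he))

lemma cycle_out_exists {η : Finset (PEdge V)} (hc : IsCycle η) {v : V} (hv : v ∈ verts η) :
    ∃ g, g ∈ η ∧ g.1.1 = v := by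
  obtain ⟨g, hg⟩ := Finset.card_eq_one.mp (hc.2.2 v hv).1
  have hmem : g ∈ outEdges η v := hg ▸ Finset.mem_singleton_self g
  exact ⟨g, (Finset.mem_filter.mp hmem).1, (Finset.mem_filter.mp hmem).2⟩

lemma cycle_in_exists {η : Finset (PEdge V)} (hc : IsCycle η) {v : V} (hv : v ∈ verts η) :
    ∃ g, g ∈ η ∧ g.1.2 = v := by
  obtain ⟨g, hg⟩ := Finset.card_eq_one.mp (hc.2.2 v hv).2
  have hmem : g ∈ inEdges η v := hg ▸ Finset.mem_singleton_self g
  exact ⟨g, (Finset.mem_filter.mp hmem).1, (Finset.mem_filter.mp hmem).2⟩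

lemma cycle_out_unique {η : Finset (PEdge V)} (hc : IsCycle η) {g g' : PEdge V}
    (hg : g ∈ η) (hg' : g' ∈ η) (h : g.1.1 = g'.1.1) : g = g' := by
  have hv : g.1.1 ∈ verts η := mem_verts_fst hg
  have hcard := (hc.2.2 _ hv).1
  have h1 : g ∈ outEdges η g.1.1 := Finset.mem_filter.mpr ⟨hg, rfl⟩
  have h2 : g' ∈ outEdges η g.1.1 := Finset.mem_filter.mpr ⟨hg', h.symm⟩
  exact Finset.card_le_one.mp (le_of_eq hcard) _ h1 _ h2

lemma cycle_in_unique {η : Finset (PEdge V)} (hc : IsCycle η) {g g' : PEdge V}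
    (hg : g ∈ η) (hg' : g' ∈ η) (h : g.1.2 = g'.1.2) : g = g' := by
  have hv : g.1.2 ∈ verts η := mem_verts_snd hg
  have hcard := (hc.2.2 _ hv).2
  have h1 : g ∈ inEdges η g.1.2 := Finset.mem_filter.mpr ⟨hg, rfl⟩
  have h2 : g' ∈ inEdges η g.1.2 := Finset.mem_filter.mpr ⟨hg', h.symm⟩
  exact Finset.card_le_one.mp (le_of_eq hcard) _ h1 _ h2

/-- The edges traversed by the greedy exploration loop from `x` are exactly
the union of the up-set `{η' ∈ C(Π) : η ⪯ η'}` of the cycle `η` containing the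
last outgoing edge from `x` used by the walk. -/
theorem greedyLoop_eq_upSet
    (Pi : Finset (PEdge V)) (hdist : DistinctTimes Pi) (hbal : Balanced Pi)
    (P : Finset (Finset (PEdge V))) (hP : IsProperCyclePartition Pi P)
    (x : V) (w : List (PEdge V)) (hw : IsGreedyLoop Pi x w)
    (estar : PEdge V) (pre post : List (PEdge V))
    (hsplit : w = pre ++ estar :: post)
    (hestar : estar.1.1 = x)
    (hlast : ∀ f ∈ post, f.1.1 ≠ x)
    (η : Finset (PEdge V)) (hη : η ∈ P) (hmem : estar ∈ η) :
    w.toFinset = (P.filter (fun η' => precRel P η η')).sup id := by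
  obtain ⟨hPpart, hanti⟩ := hP
  obtain ⟨hPcyc, hPsub, hPdisj, hPcov⟩ := hPpart
  obtain ⟨hne, hnd, hmemPi, hhead, hlastw, hchain, hgreedy, hexh⟩ := hw
  have hestarw : estar ∈ w := by
    rw [hsplit]; exact List.mem_append_right _ List.mem_cons_self
  have hestarPi : estar ∈ Pi := hmemPi estar hestarw
  have hnot_take : ∀ (m : ℕ) (j : Fin w.length), m ≤ (j : ℕ) → w.get j ∉ w.take m := by
    intro m j hmj hmem'
    obtain ⟨k, hk⟩ := List.mem_iff_get.mp hmem'
    have hk2 : (k : ℕ) < w.length := by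
      have := k.2; simp only [List.length_take] at this; omega
    have hkm : (k : ℕ) < m := by
      have := k.2; simp only [List.length_take] at this; omega
    have heq : w.get ⟨k, hk2⟩ = w.get j := by
      rw [← hk]; symm; simp [List.get_eq_getElem, List.getElem_take]
    have h2 := (List.Nodup.get_inj_iff hnd).mp heq
    have h3 : (k : ℕ) = (j : ℕ) := congrArg Fin.val h2
    omega
  have greedy_unused : ∀ f ∈ Pi, f ∉ w → ∀ g ∈ w, f.1.1 = g.1.1 → f.2 ≤ g.2 := by
    intro f hf hfw g hg hsrc
    obtain ⟨i, rfl⟩ := List.mem_iff_get.mp hg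
    exact hgreedy i f hf hsrc fun hm => hfw (List.take_subset _ _ hm)
  have hbalS : ∀ v : V, (w.toFinset.filter (fun e => e.1.1 = v)).card
      = (w.toFinset.filter (fun e => e.1.2 = v)).card := by
    intro v
    have h := walk_balance v w x x hne hhead hlastw hchain
    have e1 := toFinset_filter_card' (fun e : PEdge V => e.1.1 = v) w hnd
    have e2 := toFinset_filter_card' (fun e : PEdge V => e.1.2 = v) w hnd
    refine Eq.trans e1 (Eq.trans ?_ e2.symm)
    show (List.filter (fun e => decide (e.1.1 = v)) w).length
        = (List.filter (fun e => decide (e.1.2 = v)) w).length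
    split_ifs at h <;> omega
  obtain ⟨cyc, hcycP⟩ : ∃ cyc : PEdge V → Finset (PEdge V),
      ∀ e ∈ Pi, cyc e ∈ P ∧ e ∈ cyc e := by
    refine ⟨fun e => if h : ∃ κ, κ ∈ P ∧ e ∈ κ then h.choose else ∅, fun e he => ?_⟩
    have h : ∃ κ, κ ∈ P ∧ e ∈ κ := by
      obtain ⟨κ, h1, h2⟩ := hPcov e he; exact ⟨κ, h1, h2⟩
    simp only [dif_pos h]
    exact h.choose_spec
  have hcyc_eq : ∀ κ ∈ P, ∀ e ∈ κ, cyc e = κ := by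
    intro κ hκ e heκ
    have hePi : e ∈ Pi := hPsub κ hκ heκ
    by_contra hne'
    exact (Finset.disjoint_left.mp (hPdisj _ (hcycP e hePi).1 _ hκ hne')) (hcycP e hePi).2 heκ
  -- Claim 1: every cycle of `P` meeting the walk is fully traversed.
  have claim1 : ∀ κ ∈ P, ∀ e ∈ κ, e ∈ w → ∀ f ∈ κ, f ∈ w := by
    by_contra hcon
    push_neg at hcon
    obtain ⟨κ0, hκ0P, e0, he0κ, he0w, f0, hf0κ, hf0nw⟩ := hcon
    set M : Finset (Finset (PEdge V)) :=
      P.filter (fun κ => (∃ e ∈ κ, e ∈ w) ∧ ¬ ∀ f ∈ κ, f ∈ w) with hM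
    have hκ0M : κ0 ∈ M := by
      refine Finset.mem_filter.mpr ⟨hκ0P, ⟨e0, he0κ, he0w⟩, ?_⟩
      push_neg
      exact ⟨f0, hf0κ, hf0nw⟩
    have hMP : ∀ μ ∈ M, μ ∈ P := fun μ h => (Finset.mem_filter.mp h).1
    have hstep : ∀ μ ∈ M, ∃ ν ∈ M, ν ≠ μ ∧ stepRel μ ν := by
      intro μ hμM
      obtain ⟨hμP, hmix⟩ := Finset.mem_filter.mp hμM
      obtain ⟨⟨eu, heuκ, heuw⟩, hnfull⟩ := hmix
      push_neg at hnfull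
      have hcycμ : IsCycle μ := hPcyc μ hμP
      set s : Finset (PEdge V) := μ.filter (fun e => e ∈ w) with hs
      have hssub : s ⊆ μ := Finset.filter_subset _ _
      have hsmem : ∀ e, e ∈ s ↔ e ∈ μ ∧ e ∈ w := fun e => Finset.mem_filter
      have hsne : s.Nonempty := ⟨eu, (hsmem eu).mpr ⟨heuκ, heuw⟩⟩
      have hsneq : s ≠ μ := by
        intro hEq
        obtain ⟨f1, hf1, hf1n⟩ := hnfull
        exact hf1n ((hsmem f1).mp (hEq ▸ hf1)).2
      obtain ⟨F, hF⟩ : ∃ F : PEdge V → PEdge V, ∀ e ∈ μ, F e ∈ μ ∧ (F e).1.1 = e.1.2 := by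
        refine ⟨fun e => if h : ∃ g, g ∈ μ ∧ g.1.1 = e.1.2 then h.choose else e,
          fun e he => ?_⟩
        have h : ∃ g, g ∈ μ ∧ g.1.1 = e.1.2 := cycle_out_exists hcycμ (mem_verts_snd he)
        simp only [dif_pos h]
        exact ⟨h.choose_spec.1, h.choose_spec.2⟩
      have hFu : ∀ e ∈ μ, ∀ g ∈ μ, g.1.1 = e.1.2 → g = F e := fun e he g hg hgsrc =>
        cycle_out_unique hcycμ hg (hF e he).1 (hgsrc.trans (hF e he).2.symm)
      have hFinj : ∀ e ∈ μ, ∀ e' ∈ μ, F e = F e' → e = e' := by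
        intro e he e' he' heq
        refine cycle_in_unique hcycμ he he' ?_
        rw [← (hF e he).2, heq, (hF e' he').2]
      by_cases hcl : ∀ e ∈ s, F e ∈ w
      · exfalso
        have hFs : ∀ e ∈ s, F e ∈ s := fun e he =>
          (hsmem _).mpr ⟨(hF e (hssub he)).1, hcl e he⟩
        have himg : s.image F = s := by
          apply Finset.eq_of_subset_of_card_le
          · intro y hy
            obtain ⟨e, he, rfl⟩ := Finset.mem_image.mp hy
            exact hFs e he
          · rw [Finset.card_image_of_injOn fun e he e' he' hEq =>
              hFinj e (hssub he) e' (hssub he') hEq]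
        have hsurj : ∀ y ∈ s, ∃ e ∈ s, F e = y := by
          intro y hy
          obtain ⟨e, he, hEq⟩ := Finset.mem_image.mp (himg.symm ▸ hy)
          exact ⟨e, he, hEq⟩
        obtain ⟨e, hes, e', he'd, z, hte, hte'⟩ := hcycμ.2.1 s hssub hsne hsneq
        have heμ : e ∈ μ := hssub hes
        obtain ⟨he'μ, he's⟩ := Finset.mem_sdiff.mp he'd
        have hnee' : e ≠ e' := fun hEq => he's (hEq ▸ hes)
        rcases hte with h1 | h1 <;> rcases hte' with h2 | h2
        · exact hnee' (cycle_out_unique hcycμ heμ he'μ (h1.trans h2.symm))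
        · obtain ⟨t, hts, hFt⟩ := hsurj e hes
          have htμ : t ∈ μ := hssub hts
          have ht2 : t.1.2 = z := by
            have h3 := (hF t htμ).2
            rw [hFt] at h3
            exact h3.symm.trans h1
          have h4 : e' = t := cycle_in_unique hcycμ he'μ htμ (h2.trans ht2.symm)
          exact he's (h4 ▸ hts)
        · have h4 : e' = F e := hFu e heμ e' he'μ (h2.trans h1.symm)
          exact he's (h4 ▸ hFs e hes)
        · exact hnee' (cycle_in_unique hcycμ heμ he'μ (h1.trans h2.symm))
      · push_neg at hcl
        obtain ⟨e, hes, hFew⟩ := hcl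
        obtain ⟨heμ, hew⟩ := (hsmem e).mp hes
        have he'μ : F e ∈ μ := (hF e heμ).1
        have he'1 : (F e).1.1 = e.1.2 := (hF e heμ).2
        have hbv := hbalS e.1.2
        have heIn : e ∈ w.toFinset.filter (fun f => f.1.2 = e.1.2) :=
          Finset.mem_filter.mpr ⟨List.mem_toFinset.mpr hew, rfl⟩
        by_cases hall : ∀ g ∈ w.toFinset.filter (fun f => f.1.1 = e.1.2),
            ∀ f ∈ cyc g, f ∈ w
        · exfalso
          obtain ⟨Φ, hΦ⟩ : ∃ Φ : PEdge V → PEdge V,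
              ∀ g, (∃ h', h' ∈ cyc g ∧ h'.1.2 = e.1.2) →
                Φ g ∈ cyc g ∧ (Φ g).1.2 = e.1.2 := by
            refine ⟨fun g => if h : ∃ h', h' ∈ cyc g ∧ h'.1.2 = e.1.2 then h.choose else g,
              fun g h => ?_⟩
            simp only [dif_pos h]
            exact ⟨h.choose_spec.1, h.choose_spec.2⟩
          have houtmem : ∀ g ∈ w.toFinset.filter (fun f => f.1.1 = e.1.2),
              g ∈ w ∧ g.1.1 = e.1.2 := by
            intro g hg
            obtain ⟨hg1, hg2⟩ := Finset.mem_filter.mp hg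
            exact ⟨List.mem_toFinset.mp hg1, hg2⟩
          have hgexists : ∀ g ∈ w.toFinset.filter (fun f => f.1.1 = e.1.2),
              ∃ h', h' ∈ cyc g ∧ h'.1.2 = e.1.2 := by
            intro g hg
            obtain ⟨hgw, hgv⟩ := houtmem g hg
            have hgPi : g ∈ Pi := hmemPi g hgw
            have hvv : e.1.2 ∈ verts (cyc g) := hgv ▸ mem_verts_fst (hcycP g hgPi).2
            exact cycle_in_exists (hPcyc _ (hcycP g hgPi).1) hvv
          have hmapsto : ∀ g ∈ w.toFinset.filter (fun f => f.1.1 = e.1.2),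
              Φ g ∈ (w.toFinset.filter (fun f => f.1.2 = e.1.2)).erase e := by
            intro g hg
            obtain ⟨hgw, hgv⟩ := houtmem g hg
            have hgPi : g ∈ Pi := hmemPi g hgw
            obtain ⟨hΦ1, hΦ2⟩ := hΦ g (hgexists g hg)
            refine Finset.mem_erase.mpr ⟨?_, Finset.mem_filter.mpr
              ⟨List.mem_toFinset.mpr (hall g hg _ hΦ1), hΦ2⟩⟩
            intro hEq
            have heincg : e ∈ cyc g := hEq ▸ hΦ1
            have hcgμ : cyc g = μ := by
              have h1 := hcyc_eq μ hμP e heμ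
              have h2 := hcyc_eq (cyc g) (hcycP g hgPi).1 e heincg
              rw [← h2, h1]
            exact hFew (hall g hg (F e) (hcgμ.symm ▸ he'μ))
          have hinjΦ : Set.InjOn Φ (w.toFinset.filter (fun f => f.1.1 = e.1.2)) := by
            intro g hg g' hg' hEq
            obtain ⟨hgw, hgv⟩ := houtmem g hg
            obtain ⟨hg'w, hg'v⟩ := houtmem g' hg'
            have hgPi : g ∈ Pi := hmemPi g hgw
            have hg'Pi : g' ∈ Pi := hmemPi g' hg'w
            obtain ⟨hΦ1, _⟩ := hΦ g (hgexists g hg)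
            obtain ⟨hΦ1', _⟩ := hΦ g' (hgexists g' hg')
            have hcc : cyc g = cyc g' := by
              have h2 := hcyc_eq (cyc g) (hcycP g hgPi).1 (Φ g) hΦ1
              have h3 := hcyc_eq (cyc g') (hcycP g' hg'Pi).1 (Φ g') hΦ1'
              rw [← h2, hEq, h3]
            have hgcg' : g ∈ cyc g' := hcc ▸ (hcycP g hgPi).2
            exact cycle_out_unique (hPcyc _ (hcycP g' hg'Pi).1) hgcg' (hcycP g' hg'Pi).2
              (hgv.trans hg'v.symm)
          have hcard := Finset.card_le_card_of_injOn Φ hmapsto hinjΦ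
          rw [Finset.card_erase_of_mem heIn] at hcard
          have hpos : 0 < (w.toFinset.filter (fun f => f.1.2 = e.1.2)).card :=
            Finset.card_pos.mpr ⟨e, heIn⟩
          omega
        · push_neg at hall
          obtain ⟨g, hgout, f, hfcg, hfnw⟩ := hall
          obtain ⟨hgw', hgv⟩ := Finset.mem_filter.mp hgout
          have hgw : g ∈ w := List.mem_toFinset.mp hgw'
          have hgPi : g ∈ Pi := hmemPi g hgw
          obtain ⟨hcgP, hgcg⟩ := hcycP g hgPi
          refine ⟨cyc g, ?_, ?_, ?_⟩
          · refine Finset.mem_filter.mpr ⟨hcgP, ⟨g, hgcg, hgw⟩, ?_⟩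
            push_neg
            exact ⟨f, hfcg, hfnw⟩
          · intro hEq
            have he'cg : F e ∈ cyc g := hEq.symm ▸ he'μ
            have h5 : g = F e := cycle_out_unique (hPcyc _ hcgP) hgcg he'cg
              (hgv.trans he'1.symm)
            exact hFew (h5 ▸ hgw)
          · exact ⟨F e, he'μ, g, hgcg, he'1.trans hgv.symm,
              greedy_unused (F e) (hPsub μ hμP he'μ) hFew g hgw (he'1.trans hgv.symm)⟩
    have hstep' : ∀ μ : {κ // κ ∈ M}, ∃ ν : {κ // κ ∈ M}, ν.1 ≠ μ.1 ∧ stepRel μ.1 ν.1 := by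
      intro μ
      obtain ⟨ν, hνM, hνne, hνst⟩ := hstep μ.1 μ.2
      refine ⟨⟨ν, hνM⟩, ?_, hνst⟩
      simpa using hνne
    choose nxt hnne hnst using hstep'
    set fc : ℕ → {κ // κ ∈ M} := fun n => nxt^[n] ⟨κ0, hκ0M⟩ with hfdef
    have hmono : ∀ n m, n ≤ m → precRel P (fc n).1 (fc m).1 := by
      intro n m hnm
      induction m, hnm using Nat.le_induction with
      | base => exact Relation.ReflTransGen.refl
      | succ m hm ih =>
        have hit : fc (m + 1) = nxt (fc m) := Function.iterate_succ_apply' nxt m _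
        rw [hit]
        exact ih.tail ⟨hMP _ (fc m).2, hMP _ (nxt (fc m)).2, hnst (fc m)⟩
    have key : ∀ a b : ℕ, a < b → fc a = fc b → False := by
      intro a b hab hfab
      have h1 : precRel P (fc a).1 (fc (a + 1)).1 := hmono a (a + 1) (by omega)
      have h2 : precRel P (fc (a + 1)).1 (fc a).1 := by
        have h3 := hmono (a + 1) b (by omega)
        rwa [show fc b = fc a from hfab.symm] at h3
      have heq := hanti _ (hMP _ (fc a).2) _ (hMP _ (fc (a + 1)).2) h1 h2
      have hit : fc (a + 1) = nxt (fc a) := Function.iterate_succ_apply' nxt a _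
      exact hnne (fc a) (by rw [← hit]; exact heq.symm)
    obtain ⟨a, b, hab, hfab⟩ := Finite.exists_ne_map_eq_of_infinite fc
    rcases lt_or_gt_of_ne hab with h | h
    · exact key a b h hfab
    · exact key b a h hfab.symm
  -- Lemma A: every cycle of `P` meeting the walk lies above `η`.
  have hestar_not_take : ∀ m : ℕ, m ≤ pre.length → estar ∉ w.take m := by
    intro m hm hmem'
    have h0 : w.take m = pre.take m := by
      rw [hsplit, show (pre ++ estar :: post).take m
          = ((pre ++ estar :: post).take pre.length).take m by
        rw [List.take_take, min_eq_left hm], List.take_left]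
    have hpre' : estar ∈ pre := List.take_subset _ _ (h0 ▸ hmem')
    have hnd' : (pre ++ estar :: post).Nodup := hsplit ▸ hnd
    exact (List.disjoint_of_nodup_append hnd') hpre' List.mem_cons_self
  have lemA : ∀ κ ∈ P, ∀ e ∈ κ, e ∈ w → precRel P η κ := by
    have aux : ∀ n : ℕ, ∀ i : Fin w.length, w.length - (i : ℕ) ≤ n →
        ∀ κ ∈ P, w.get i ∈ κ → precRel P η κ := by
      intro n
      induction n with
      | zero =>
        intro i hi
        exfalso
        have := i.2
        omega
      | succ n ih =>
        intro i hi κ hκP hgκ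
        by_cases hlater : ∃ j : Fin w.length, (i : ℕ) < (j : ℕ) ∧ w.get j ∈ κ
        · obtain ⟨j, hij, hjκ⟩ := hlater
          exact ih j (by omega) κ hκP hjκ
        · push_neg at hlater
          have hgw : w.get i ∈ w := List.get_mem w i
          have hκS : ∀ f ∈ κ, f ∈ w := claim1 κ hκP (w.get i) hgκ hgw
          by_cases hend : (i : ℕ) + 1 < w.length
          · set c := w.get ⟨(i : ℕ) + 1, hend⟩ with hc
            have hcc : (w.get i).1.2 = c.1.1 := List.isChain_iff_getElem.mp hchain i.1 (by omega)
            have hv2 : (w.get i).1.2 ∈ verts κ := mem_verts_snd hgκ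
            obtain ⟨d, hdκ, hd1⟩ := cycle_out_exists (hPcyc κ hκP) hv2
            have hdw : d ∈ w := hκS d hdκ
            obtain ⟨idx, hidx⟩ := List.mem_iff_get.mp hdw
            have hidle : (idx : ℕ) ≤ (i : ℕ) := by
              by_contra hgt
              push_neg at hgt
              exact hlater idx hgt (hidx ▸ hdκ)
            have hcw : c ∈ w := List.get_mem w _
            have hcPi : c ∈ Pi := hmemPi c hcw
            have hcd : c.2 ≤ d.2 := by
              have hsrc : c.1.1 = (w.get idx).1.1 := by rw [hidx, hd1, ← hcc]
              have hnt : c ∉ w.take (idx : ℕ) :=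
                hnot_take idx ⟨(i : ℕ) + 1, hend⟩ (by show (idx : ℕ) ≤ (i : ℕ) + 1; omega)
              have h6 := hgreedy idx c hcPi hsrc hnt
              rwa [hidx] at h6
            obtain ⟨hccP, hccg⟩ := hcycP c hcPi
            have hpre : precRel P η (cyc c) := ih ⟨(i : ℕ) + 1, hend⟩
              (by show w.length - ((i : ℕ) + 1) ≤ n; omega) (cyc c) hccP hccg
            exact hpre.tail ⟨hccP, hκP, c, hccg, d, hdκ, hcc.symm.trans hd1.symm, hcd⟩
          · have hieq : i = (⟨w.length - 1, by have := i.2; omega⟩ : Fin w.length) := by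
              apply Fin.ext
              show (i : ℕ) = w.length - 1
              have := i.2
              omega
            have hglast : w.getLast? = some (w.get i) := by
              rw [List.getLast?_eq_getLast hne, List.getLast_eq_getElem, hieq, List.get_eq_getElem]
            have hu : (w.get i).1.2 = x := hlastw _ hglast
            have hvx : x ∈ verts κ := hu ▸ mem_verts_snd hgκ
            obtain ⟨b', hb'κ, hb'1⟩ := cycle_out_exists (hPcyc κ hκP) hvx
            have hb'w : b' ∈ w := hκS b' hb'κ
            have hb'cases : b' ∈ pre ∨ b' = estar := by
              rw [hsplit] at hb'w
              rcases List.mem_append.mp hb'w with h | h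
              · exact Or.inl h
              · rcases List.mem_cons.mp h with h | h
                · exact Or.inr h
                · exact absurd hb'1 (hlast b' h)
            rcases hb'cases with hb'pre | hbeq
            · obtain ⟨ibp, hibp⟩ := List.mem_iff_get.mp hb'pre
              have hiblt : (ibp : ℕ) < pre.length := ibp.2
              have hlenw : pre.length < w.length := by
                rw [hsplit, List.length_append, List.length_cons]
                omega
              have hwib : w.get ⟨(ibp : ℕ), by omega⟩ = b' := by
                subst hsplit
                have h8 : (pre ++ estar :: post).get ⟨(ibp : ℕ), by omega⟩
                    = pre.get ⟨(ibp : ℕ), hiblt⟩ := by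
                  rw [List.get_eq_getElem, List.get_eq_getElem, List.getElem_append_left]
                rw [h8]
                exact hibp
              have hle2 : estar.2 ≤ b'.2 := by
                have hsrc : estar.1.1 = (w.get ⟨(ibp : ℕ), by omega⟩).1.1 := by
                  rw [hwib, hb'1, hestar]
                have hnt : estar ∉ w.take (ibp : ℕ) := hestar_not_take _ (by omega)
                have h7 := hgreedy ⟨(ibp : ℕ), by omega⟩ estar hestarPi hsrc hnt
                rwa [hwib] at h7
              exact Relation.ReflTransGen.single
                ⟨hη, hκP, estar, hmem, b', hb'κ, hestar.trans hb'1.symm, hle2⟩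
            · have hκη : κ = η := by
                by_contra hne'
                exact (Finset.disjoint_left.mp (hPdisj κ hκP η hη hne'))
                  hb'κ (hbeq ▸ hmem)
              rw [hκη]
              exact Relation.ReflTransGen.refl
    intro κ hκP e heκ hew
    obtain ⟨i, hi⟩ := List.mem_iff_get.mp hew
    exact aux w.length i (by omega) κ hκP (hi ▸ heκ)
  -- Lemma B: every cycle above `η` is fully traversed.
  have lemB : ∀ κ, precRel P η κ → ∀ f ∈ κ, f ∈ w := by
    intro κ hκ
    induction hκ with
    | refl => exact fun f hf => claim1 η hη estar hmem hestarw f hf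
    | tail hab hbc ih =>
      obtain ⟨haP, hbP, e1, he1, e2, he2, hsrc, hle⟩ := hbc
      have he1w : e1 ∈ w := ih e1 he1
      have he2w : e2 ∈ w := by
        by_contra he2w
        have h1 := greedy_unused e2 (hPsub _ hbP he2) he2w e1 he1w hsrc.symm
        have h2 : e1 = e2 := hdist e1 (hPsub _ haP he1) e2 (hPsub _ hbP he2)
          (le_antisymm hle h1)
        exact he2w (h2 ▸ he1w)
      exact claim1 _ hbP e2 he2 he2w
  ext f
  simp only [Finset.mem_sup, Finset.mem_filter, List.mem_toFinset, id]
  constructor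
  · intro hfw
    have hfPi := hmemPi f hfw
    obtain ⟨κ, hκP, hfκ⟩ := hPcov f hfPi
    exact ⟨κ, ⟨hκP, lemA κ hκP f hfκ hfw⟩, hfκ⟩
  · rintro ⟨κ, ⟨hκP, hκpre⟩, hfκ⟩
    exact lemB κ hκpre f hfκ

end BKT
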